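/- Let X be a compact Hausdorff space, Y a Hausdorff space, f : X → X, g : Y → Y continuous, and h : X → Y a continuous surjection with h ∘ f = g ∘ h such that every fiber h⁻¹({y}) (y ∈ Y) is connected. Then for every ŷ ∈ N_g, the fiber ĥ⁻¹({ŷ}) of the lifted map ĥ(ẑ) := (h(z₀), h(z₋₁), …) is a nonempty, compact, connected subset of N_f. -/
import Mathlib


/-- The natural extension of `f : X → X`: the space of full backward orbits
`ẑ = (z₀, z₋₁, z₋₂, …)` with `f (z₋ₙ₋₁) = z₋ₙ`, inside the product `X^ℕ`. -/
def natExt {X : Type*} (f : X → X) : Set (ℕ → X) := {z | ∀ n, f (z (n + 1)) = z n}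

/-- An antitone intersection of nonempty compact preconnected sets in a T2 space
is preconnected. -/
lemma isPreconnected_iInter_of_antitone {α : Type*} [TopologicalSpace α] [T2Space α]
    (C : ℕ → Set α) (hanti : Antitone C) (hcpt : ∀ n, IsCompact (C n))
    (hconn : ∀ n, IsPreconnected (C n)) (hne : ∀ n, (C n).Nonempty) :
    IsPreconnected (⋂ n, C n) := by
  rw [isPreconnected_iff_subset_of_disjoint_closed]
  intro t t' ht ht' hcov hdisj
  set K := ⋂ n, C n with hK
  have hKcpt : IsCompact K := (hcpt 0).of_isClosed_subset
    (isClosed_iInter fun n => (hcpt n).isClosed) (Set.iInter_subset _ 0)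
  by_cases hA : (K ∩ t).Nonempty
  · by_cases hB : (K ∩ t').Nonempty
    · -- both nonempty: derive a contradiction
      exfalso
      have hAc : IsCompact (K ∩ t) := hKcpt.inter_right ht
      have hBc : IsCompact (K ∩ t') := hKcpt.inter_right ht'
      have hABdisj : Disjoint (K ∩ t) (K ∩ t') := by
        rw [Set.disjoint_iff_inter_eq_empty]
        rw [show K ∩ t ∩ (K ∩ t') = K ∩ (t ∩ t') by ext x; simp; tauto]
        exact hdisj
      obtain ⟨U, V, hU, hV, hAU, hBV, hUV⟩ :=
        SeparatedNhds.of_isCompact_isCompact hAc hBc hABdisj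
      -- the sets C n \ (U ∪ V) are compact, directed, with empty intersection
      have hempty : ⋂ n, (C n \ (U ∪ V)) = ∅ := by
        apply Set.eq_empty_iff_forall_notMem.mpr
        intro x hx
        have hxK : x ∈ K := Set.mem_iInter.mpr fun n => (Set.mem_iInter.mp hx n).1
        have hxn := (Set.mem_iInter.mp hx 0).2
        rcases hcov hxK with hxt | hxt'
        · exact hxn (Or.inl (hAU ⟨hxK, hxt⟩))
        · exact hxn (Or.inr (hBV ⟨hxK, hxt'⟩))
      have hnotall : ¬ ∀ n, (C n \ (U ∪ V)).Nonempty := by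
        intro hall
        have := IsCompact.nonempty_iInter_of_directed_nonempty_isCompact_isClosed
          (fun n => C n \ (U ∪ V))
          (fun m n => ⟨max m n,
            Set.diff_subset_diff_left (hanti (le_max_left m n)),
            Set.diff_subset_diff_left (hanti (le_max_right m n))⟩)
          hall
          (fun n => ((hcpt n).of_isClosed_subset
            (((hcpt n).isClosed).sdiff (hU.union hV)) Set.diff_subset))
          (fun n => ((hcpt n).isClosed).sdiff (hU.union hV))
        rw [hempty] at this
        exact Set.not_nonempty_empty this
      push_neg at hnotall
      obtain ⟨n, hn⟩ := hnotall
      rw [Set.diff_eq_empty] at hn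
      -- C n is preconnected, contained in U ∪ V, and meets both U and V
      have hmeetU : (C n ∩ U).Nonempty := by
        obtain ⟨x, hxK, hxt⟩ := hA
        exact ⟨x, Set.mem_iInter.mp hxK n, hAU ⟨hxK, hxt⟩⟩
      have hmeetV : (C n ∩ V).Nonempty := by
        obtain ⟨x, hxK, hxt'⟩ := hB
        exact ⟨x, Set.mem_iInter.mp hxK n, hBV ⟨hxK, hxt'⟩⟩
      obtain ⟨x, hx⟩ := (hconn n) U V hU hV hn hmeetU hmeetV
      exact (hUV.le_bot ⟨hx.2.1, hx.2.2⟩)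
    · -- K ∩ t' empty, so K ⊆ t
      left
      intro x hx
      rcases hcov hx with hxt | hxt'
      · exact hxt
      · exact absurd ⟨x, hx, hxt'⟩ hB
  · -- K ∩ t empty, so K ⊆ t'
    right
    intro x hx
    rcases hcov hx with hxt | hxt'
    · exact absurd ⟨x, hx, hxt⟩ hA
    · exact hxt'

theorem lift_fibers_nonempty_compact_connected {X Y : Type*}
    [TopologicalSpace X] [TopologicalSpace Y]
    [CompactSpace X] [T2Space X] [T2Space Y]
    (f : X → X) (g : Y → Y) (h : X → Y)
    (hf : Continuous f) (hg : Continuous g) (hh : Continuous h)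
    (hsurj : Function.Surjective h) (hconj : h ∘ f = g ∘ h)
    (hfib : ∀ y : Y, IsConnected (h ⁻¹' {y})) :
    ∀ y ∈ natExt g,
      ({z : ℕ → X | z ∈ natExt f ∧ ∀ n, h (z n) = y n}).Nonempty ∧
      IsCompact {z : ℕ → X | z ∈ natExt f ∧ ∀ n, h (z n) = y n} ∧
      IsConnected {z : ℕ → X | z ∈ natExt f ∧ ∀ n, h (z n) = y n} := by
  intro y hy
  have hy' : ∀ n, g (y (n + 1)) = y n := hy
  set S : Set (ℕ → X) := {z : ℕ → X | z ∈ natExt f ∧ ∀ n, h (z n) = y n} with hS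
  -- basic iterate identities
  have hconj' : ∀ x, h (f x) = g (h x) := fun x => congrFun hconj x
  have hiter : ∀ (k : ℕ) (x : X), h (f^[k] x) = g^[k] (h x) := by
    intro k
    induction k with
    | zero => intro x; simp
    | succ k ih =>
      intro x
      rw [Function.iterate_succ_apply, Function.iterate_succ_apply, ih, hconj']
  have hyiter : ∀ (n k : ℕ), g^[k] (y (n + k)) = y n := by
    intro n k
    induction k with
    | zero => simp
    | succ k ih =>
      rw [Function.iterate_succ_apply, show n + (k + 1) = (n + k) + 1 by ring, hy', ih]
  -- the product of the fibers
  set T : Set (ℕ → X) := {w : ℕ → X | ∀ n, h (w n) = y n} with hT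
  have hTclosed : IsClosed T := by
    have : T = ⋂ n, (fun w : ℕ → X => h (w n)) ⁻¹' {y n} := by
      ext w; simp [hT, Set.mem_iInter]
    rw [this]
    exact isClosed_iInter fun n =>
      IsClosed.preimage (hh.comp (continuous_apply n)) isClosed_singleton
  have hTcpt : IsCompact T := hTclosed.isCompact
  have hTpi : T = Set.pi Set.univ (fun n : ℕ => h ⁻¹' {y n}) := by
    ext w; simp [hT, Set.mem_pi]
  have hTconn : IsConnected T := by
    rw [hTpi]
    exact isConnected_univ_pi.mpr fun n => hfib (y n)
  -- the maps φ N
  set φ : ℕ → (ℕ → X) → (ℕ → X) :=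
    fun N w n => if N ≤ n then w n else f^[N - n] (w N) with hφ
  have hφcont : ∀ N, Continuous (φ N) := by
    intro N
    apply continuous_pi
    intro n
    simp only [hφ]
    split_ifs
    · exact continuous_apply n
    · exact (hf.iterate (N - n)).comp (continuous_apply N)
  -- the approximating sets
  set E : ℕ → Set (ℕ → X) :=
    fun N => {z : ℕ → X | (∀ n < N, f (z (n + 1)) = z n) ∧ ∀ n, h (z n) = y n} with hE
  have hEimg : ∀ N, E N = φ N '' T := by
    intro N
    ext z
    constructor
    · rintro ⟨hchain, hzfib⟩
      refine ⟨z, hzfib, ?_⟩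
      -- φ N z = z, since z n = f^[N - n] (z N) for n ≤ N
      have key : ∀ k, k ≤ N → f^[k] (z N) = z (N - k) := by
        intro k
        induction k with
        | zero => intro _; simp
        | succ k ih =>
          intro hk
          rw [Function.iterate_succ_apply', ih (le_of_lt (Nat.lt_of_succ_le hk))]
          have h1 : N - k = (N - (k + 1)) + 1 := by omega
          rw [h1, hchain _ (by omega)]
      funext n
      simp only [hφ]
      split_ifs with hn
      · rfl
      · push_neg at hn
        have := key (N - n) (by omega)
        rw [show N - (N - n) = n by omega] at this
        exact this
    · rintro ⟨w, hw, rfl⟩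
      constructor
      · intro n hn
        simp only [hφ]
        split_ifs with h1 h2
        · -- N ≤ n + 1 and N ≤ n: impossible since n < N
          omega
        · -- N ≤ n + 1, n < N: so n + 1 = N
          have : n + 1 = N := by omega
          subst this
          rw [show n + 1 - n = 1 by omega]
          simp
        · omega
        · -- n + 1 < N case (well, ¬ N ≤ n + 1)
          rw [← Function.iterate_succ_apply' f (N - (n + 1)) (w N)]
          congr 1
          omega
      · intro n
        simp only [hφ]
        split_ifs with h1
        · exact hw n
        · push_neg at h1
          have h2 := hyiter n (N - n)
          rw [show n + (N - n) = N by omega] at h2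
          rw [hiter, hw N]
          exact h2
  have hEclosed : ∀ N, IsClosed (E N) := by
    intro N
    have : E N = (⋂ n ∈ Set.Iio N,
        {z : ℕ → X | f (z (n + 1)) = z n}) ∩ {z : ℕ → X | ∀ n, h (z n) = y n} := by
      ext z
      simp only [hE, Set.mem_setOf_eq, Set.mem_inter_iff, Set.mem_iInter, Set.mem_Iio]
    rw [this]
    refine IsClosed.inter (isClosed_biInter fun n _ => ?_) hTclosed
    exact isClosed_eq (hf.comp (continuous_apply (n + 1))) (continuous_apply n)
  have hEcpt : ∀ N, IsCompact (E N) := fun N => (hEclosed N).isCompact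
  have hEne : ∀ N, (E N).Nonempty := by
    intro N
    rw [hEimg]
    exact (hTconn.nonempty.image _)
  have hEconn : ∀ N, IsPreconnected (E N) := by
    intro N
    rw [hEimg]
    exact (hTconn.image _ (hφcont N).continuousOn).isPreconnected
  have hEanti : Antitone E := by
    apply antitone_nat_of_succ_le
    intro N z hz
    exact ⟨fun n hn => hz.1 n (by omega), hz.2⟩
  have hSE : S = ⋂ N, E N := by
    ext z
    simp only [hS, Set.mem_setOf_eq, Set.mem_iInter, hE, natExt]
    constructor
    · rintro ⟨h1, h2⟩ N
      exact ⟨fun n _ => h1 n, h2⟩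
    · intro hall
      exact ⟨fun n => (hall (n + 1)).1 n (by omega), (hall 0).2⟩
  have hSclosed : IsClosed S := by
    rw [hSE]; exact isClosed_iInter hEclosed
  have hScpt : IsCompact S := hSclosed.isCompact
  have hSne : S.Nonempty := by
    rw [hSE]
    exact IsCompact.nonempty_iInter_of_directed_nonempty_isCompact_isClosed E
      hEanti.directed_ge hEne hEcpt hEclosed
  refine ⟨hSne, hScpt, hSne, ?_⟩
  rw [hSE]
  exact isPreconnected_iInter_of_antitone E hEanti hEcpt hEconn hEne
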